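/- arXiv:1004.3854 — 2 statements merged into one kernel-verified Lean document; each statement's English description precedes it below -/
import Mathlib

section
/- Let n be a positive integer and a,b real parameters. Consider the Tremblay–Turbiner–Winternitz Hamiltonian H = (1/2)(p_r² + p_φ²/r²) + a/(r² cos²(nφ)) + b/(r² sin²(nφ)) and set G := (1/2)p_φ² + a/cos²(nφ) + b/sin²(nφ). Then on the open set where r > 0, cos(nφ) ≠ 0, sin(nφ) ≠ 0 and G > 0, the functions F₁ := Σ_{k=0}^{n} (−1)ᵏ C(2n,2k) (2G)^{n−k} (p_r^{2k}/r^{2(n−k)}) [ G sin(2nφ) p_φ − (2(n−k)/(2k+1)) (G cos(2nφ) + b − a) r p_r ] and F₂ := Σ_{k=0}^{n} (−1)ᵏ C(2n,2k) (2G)^{n−k} (p_r^{2k}/r^{2(n−k)}) [ (2(n−k)/(2k+1)) sin(2nφ) r p_r p_φ + 2 (G cos(2nφ) + b − a) ] are first integrals of H: {H,F₁} = 0 and {H,F₂} = 0. -/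
/-- The canonical Poisson bracket of two functions of `(r, φ, p_r, p_φ)`. -/
noncomputable def poissonBracket (F G : ℝ → ℝ → ℝ → ℝ → ℝ)
    (r φ pr pφ : ℝ) : ℝ :=
  deriv (fun x => F x φ pr pφ) r * deriv (fun x => G r φ x pφ) pr
  - deriv (fun x => F r φ x pφ) pr * deriv (fun x => G x φ pr pφ) r
  + deriv (fun x => F r x pr pφ) φ * deriv (fun x => G r φ pr x) pφ
  - deriv (fun x => F r φ pr x) pφ * deriv (fun x => G r x pr pφ) φ

open Real Finset


noncomputable def ttwW (n k : ℕ) : ℝ := (-1:ℝ)^k * ((2*n).choose (2*k) : ℝ)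
noncomputable def ttwE (n k : ℕ) : ℝ := 2*((n:ℝ) - k)/(2*k+1)

lemma hasDerivAt_lin (c x : ℝ) : HasDerivAt (fun y : ℝ => c * y) c x := by
  simpa using (hasDerivAt_id x).const_mul c

lemma hasDerivAt_G (n : ℕ) (a b pφ : ℝ) (φ : ℝ) (hc : Real.cos (n*φ) ≠ 0)
    (hs : Real.sin (n*φ) ≠ 0) :
    HasDerivAt (fun x => (1 / 2) * pφ ^ 2 + a / Real.cos (n*x) ^ 2 + b / Real.sin (n*x) ^ 2)
      (2*n*(a*Real.sin (n*φ)/Real.cos (n*φ)^3 - b*Real.cos (n*φ)/Real.sin (n*φ)^3)) φ := by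
  have hlin : HasDerivAt (fun x : ℝ => (n:ℝ)*x) n φ := hasDerivAt_lin _ _
  have hcos : HasDerivAt (fun x => Real.cos (n*x)) (-Real.sin (n*φ) * n) φ :=
    (Real.hasDerivAt_cos ((n:ℝ)*φ)).comp φ hlin
  have hsin : HasDerivAt (fun x => Real.sin (n*x)) (Real.cos (n*φ) * n) φ :=
    (Real.hasDerivAt_sin ((n:ℝ)*φ)).comp φ hlin
  have h1 : HasDerivAt (fun x => a / Real.cos (n*x)^2)
      (2*n*(a*Real.sin (n*φ)/Real.cos (n*φ)^3)) φ := by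
    have := (hasDerivAt_const φ a).fun_div (hcos.fun_pow 2) (pow_ne_zero 2 hc)
    refine this.congr_deriv ?_
    field_simp; ring
  have h2 : HasDerivAt (fun x => b / Real.sin (n*x)^2)
      (-(2*n*(b*Real.cos (n*φ)/Real.sin (n*φ)^3))) φ := by
    have := (hasDerivAt_const φ b).fun_div (hsin.fun_pow 2) (pow_ne_zero 2 hs)
    refine this.congr_deriv ?_
    field_simp; ring
  have h3 := (h1.fun_add h2).const_add ((1 / 2) * pφ ^ 2)
  have heq : (fun x => (1 / 2) * pφ ^ 2 + (a / Real.cos (n*x)^2 + b / Real.sin (n*x)^2))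
      = (fun x => (1 / 2) * pφ ^ 2 + a / Real.cos (n*x) ^ 2 + b / Real.sin (n*x) ^ 2) := by
    funext x; ring
  rw [heq] at h3
  refine h3.congr_deriv ?_
  ring

lemma hasDerivAt_Gp (n : ℕ) (a b φ : ℝ) (pφ : ℝ) :
    HasDerivAt (fun x : ℝ => (1 / 2) * x ^ 2 + a / Real.cos (n*φ) ^ 2 + b / Real.sin (n*φ) ^ 2)
      pφ pφ := by
  have := (((hasDerivAt_pow 2 pφ).const_mul ((1:ℝ)/2)).add_const
    (a / Real.cos (n*φ) ^ 2)).add_const (b / Real.sin (n*φ) ^ 2)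
  refine this.congr_deriv ?_
  ring

lemma hasDerivAt_S (n : ℕ) (φ : ℝ) :
    HasDerivAt (fun x => Real.sin (2*n*x)) (Real.cos (2*n*φ)*(2*n)) φ :=
  (Real.hasDerivAt_sin ((2*n:ℝ)*φ)).comp φ (hasDerivAt_lin _ _)

lemma hasDerivAt_C (n : ℕ) (φ : ℝ) :
    HasDerivAt (fun x => Real.cos (2*n*x)) (-Real.sin (2*n*φ)*(2*n)) φ :=
  (Real.hasDerivAt_cos ((2*n:ℝ)*φ)).comp φ (hasDerivAt_lin _ _)

lemma hasDerivAt_invpow (p : ℕ) (c x : ℝ) (hx : x ≠ 0) :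
    HasDerivAt (fun y : ℝ => c / y^p) (-((p:ℕ):ℝ) * (c/x^p) / x) x := by
  have := (hasDerivAt_const x c).fun_div (hasDerivAt_pow p x) (pow_ne_zero p hx)
  refine this.congr_deriv ?_
  rcases Nat.eq_zero_or_pos p with hp | hp
  · subst hp; simp
  · have h1 : x^(p-1) = x^p / x := by
      rw [eq_div_iff hx, ← pow_succ]; congr 1; omega
    rw [h1]; field_simp; ring

/-! ### closed forms -/

noncomputable def ttwV1r (n k : ℕ) (g S C a b r pr pφ : ℝ) : ℝ :=
  ttwW n k * (2*g)^(n-k) * (-((2*(n-k):ℕ):ℝ)) * (pr^(2*k)/r^(2*(n-k))) / r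
      * (g*S*pφ - ttwE n k*(g*C+b-a)*r*pr)
  + ttwW n k * (2*g)^(n-k) * (pr^(2*k)/r^(2*(n-k))) * (-(ttwE n k*(g*C+b-a)*pr))

noncomputable def ttwV1pr (n k : ℕ) (g S C a b r pr pφ : ℝ) : ℝ :=
  ttwW n k * (2*g)^(n-k) * (((2*k:ℕ):ℝ) * pr^(2*k-1) / r^(2*(n-k)))
      * (g*S*pφ - ttwE n k*(g*C+b-a)*r*pr)
  + ttwW n k * (2*g)^(n-k) * (pr^(2*k)/r^(2*(n-k))) * (-(ttwE n k*(g*C+b-a)*r))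

noncomputable def ttwV1pphi (n k : ℕ) (g S C a b r pr pφ : ℝ) : ℝ :=
  ttwW n k * (((n-k:ℕ):ℝ) * (2*g)^(n-k-1) * (2*pφ)) * (pr^(2*k)/r^(2*(n-k)))
      * (g*S*pφ - ttwE n k*(g*C+b-a)*r*pr)
  + ttwW n k * (2*g)^(n-k) * (pr^(2*k)/r^(2*(n-k)))
      * (pφ*S*pφ + g*S - ttwE n k*(pφ*C)*r*pr)

noncomputable def ttwV1phi (n k : ℕ) (g g' S C a b r pr pφ : ℝ) : ℝ :=
  ttwW n k * (((n-k:ℕ):ℝ) * (2*g)^(n-k-1) * (2*g')) * (pr^(2*k)/r^(2*(n-k)))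
      * (g*S*pφ - ttwE n k*(g*C+b-a)*r*pr)
  + ttwW n k * (2*g)^(n-k) * (pr^(2*k)/r^(2*(n-k)))
      * (g'*S*pφ + g*(C*(2*n))*pφ - ttwE n k*((g'*C - g*(S*(2*n)))*r*pr))

noncomputable def ttwV2r (n k : ℕ) (g S C a b r pr pφ : ℝ) : ℝ :=
  ttwW n k * (2*g)^(n-k) * (-((2*(n-k):ℕ):ℝ)) * (pr^(2*k)/r^(2*(n-k))) / r
      * (ttwE n k*S*r*pr*pφ + 2*(g*C+b-a))
  + ttwW n k * (2*g)^(n-k) * (pr^(2*k)/r^(2*(n-k))) * (ttwE n k*S*pr*pφ)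

noncomputable def ttwV2pr (n k : ℕ) (g S C a b r pr pφ : ℝ) : ℝ :=
  ttwW n k * (2*g)^(n-k) * (((2*k:ℕ):ℝ) * pr^(2*k-1) / r^(2*(n-k)))
      * (ttwE n k*S*r*pr*pφ + 2*(g*C+b-a))
  + ttwW n k * (2*g)^(n-k) * (pr^(2*k)/r^(2*(n-k))) * (ttwE n k*S*r*pφ)

noncomputable def ttwV2pphi (n k : ℕ) (g S C a b r pr pφ : ℝ) : ℝ :=
  ttwW n k * (((n-k:ℕ):ℝ) * (2*g)^(n-k-1) * (2*pφ)) * (pr^(2*k)/r^(2*(n-k)))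
      * (ttwE n k*S*r*pr*pφ + 2*(g*C+b-a))
  + ttwW n k * (2*g)^(n-k) * (pr^(2*k)/r^(2*(n-k)))
      * (ttwE n k*S*r*pr + 2*(pφ*C))

noncomputable def ttwV2phi (n k : ℕ) (g g' S C a b r pr pφ : ℝ) : ℝ :=
  ttwW n k * (((n-k:ℕ):ℝ) * (2*g)^(n-k-1) * (2*g')) * (pr^(2*k)/r^(2*(n-k)))
      * (ttwE n k*S*r*pr*pφ + 2*(g*C+b-a))
  + ttwW n k * (2*g)^(n-k) * (pr^(2*k)/r^(2*(n-k)))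
      * (ttwE n k*(C*(2*n))*r*pr*pφ + 2*(g'*C - g*(S*(2*n))))

/-! ### derivatives of the sums -/

lemma derivF1_r (n : ℕ) (a b r φ pr pφ : ℝ) (hr : r ≠ 0) (g S C : ℝ) :
    deriv (fun x => ∑ k ∈ Finset.range (n + 1),
      (-1 : ℝ) ^ k * ((2 * n).choose (2 * k) : ℝ) * (2 * g) ^ (n - k)
        * (pr ^ (2 * k) / x ^ (2 * (n - k)))
        * (g * S * pφ
            - 2 * ((n : ℝ) - k) / (2 * k + 1) * (g * C + b - a) * x * pr)) r
    = ∑ k ∈ Finset.range (n + 1), ttwV1r n k g S C a b r pr pφ := by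
  apply HasDerivAt.deriv
  apply HasDerivAt.fun_sum
  intro k _
  have h1 := hasDerivAt_invpow (2*(n-k)) (pr^(2*k)) r hr
  have h2 : HasDerivAt (fun x : ℝ =>
      g * S * pφ - 2*((n:ℝ)-k)/(2*k+1) * (g * C + b - a) * x * pr)
      (-(2*((n:ℝ)-k)/(2*k+1) * (g * C + b - a) * pr)) r :=
    ((hasDerivAt_lin (2*((n:ℝ)-k)/(2*k+1) * (g * C + b - a)) r).mul_const pr).const_sub
      (g * S * pφ)
  have h3 := (h1.const_mul ((-1:ℝ)^k * ((2*n).choose (2*k) : ℝ) * (2*g)^(n-k))).fun_mul h2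
  have heq : (fun x : ℝ =>
      (-1 : ℝ) ^ k * ((2 * n).choose (2 * k) : ℝ) * (2 * g) ^ (n - k)
        * (pr ^ (2 * k) / x ^ (2 * (n - k)))
        * (g * S * pφ - 2 * ((n : ℝ) - k) / (2 * k + 1) * (g * C + b - a) * x * pr))
      = (fun x : ℝ =>
      ((-1 : ℝ) ^ k * ((2 * n).choose (2 * k) : ℝ) * (2 * g) ^ (n - k)
        * (pr ^ (2 * k) / x ^ (2 * (n - k))))
        * (g * S * pφ - 2 * ((n : ℝ) - k) / (2 * k + 1) * (g * C + b - a) * x * pr)) := by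
    funext x; ring
  rw [heq]
  refine h3.congr_deriv ?_
  all_goals (simp only [ttwV1r, ttwW, ttwE]; try ring)

lemma derivF2_r (n : ℕ) (a b r φ pr pφ : ℝ) (hr : r ≠ 0) (g S C : ℝ) :
    deriv (fun x => ∑ k ∈ Finset.range (n + 1),
      (-1 : ℝ) ^ k * ((2 * n).choose (2 * k) : ℝ) * (2 * g) ^ (n - k)
        * (pr ^ (2 * k) / x ^ (2 * (n - k)))
        * (2 * ((n : ℝ) - k) / (2 * k + 1) * S * x * pr * pφ
            + 2 * (g * C + b - a))) r
    = ∑ k ∈ Finset.range (n + 1), ttwV2r n k g S C a b r pr pφ := by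
  apply HasDerivAt.deriv
  apply HasDerivAt.fun_sum
  intro k _
  have h1 := hasDerivAt_invpow (2*(n-k)) (pr^(2*k)) r hr
  have h2 : HasDerivAt (fun x : ℝ =>
      2*((n:ℝ)-k)/(2*k+1) * S * x * pr * pφ + 2 * (g * C + b - a))
      (2*((n:ℝ)-k)/(2*k+1) * S * pr * pφ) r := by
    have := (((hasDerivAt_lin (2*((n:ℝ)-k)/(2*k+1) * S) r).mul_const pr).mul_const
      pφ).add_const (2 * (g * C + b - a))
    convert this using 1
    all_goals ring
  have h3 := (h1.const_mul ((-1:ℝ)^k * ((2*n).choose (2*k) : ℝ) * (2*g)^(n-k))).fun_mul h2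
  have heq : (fun x : ℝ =>
      (-1 : ℝ) ^ k * ((2 * n).choose (2 * k) : ℝ) * (2 * g) ^ (n - k)
        * (pr ^ (2 * k) / x ^ (2 * (n - k)))
        * (2 * ((n : ℝ) - k) / (2 * k + 1) * S * x * pr * pφ + 2 * (g * C + b - a)))
      = (fun x : ℝ =>
      ((-1 : ℝ) ^ k * ((2 * n).choose (2 * k) : ℝ) * (2 * g) ^ (n - k)
        * (pr ^ (2 * k) / x ^ (2 * (n - k))))
        * (2 * ((n : ℝ) - k) / (2 * k + 1) * S * x * pr * pφ + 2 * (g * C + b - a))) := by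
    funext x; ring
  rw [heq]
  refine h3.congr_deriv ?_
  all_goals (simp only [ttwV2r, ttwW, ttwE]; try ring)

lemma derivF1_pr (n : ℕ) (a b r φ pr pφ : ℝ) (g S C : ℝ) :
    deriv (fun x => ∑ k ∈ Finset.range (n + 1),
      (-1 : ℝ) ^ k * ((2 * n).choose (2 * k) : ℝ) * (2 * g) ^ (n - k)
        * (x ^ (2 * k) / r ^ (2 * (n - k)))
        * (g * S * pφ
            - 2 * ((n : ℝ) - k) / (2 * k + 1) * (g * C + b - a) * r * x)) pr
    = ∑ k ∈ Finset.range (n + 1), ttwV1pr n k g S C a b r pr pφ := by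
  apply HasDerivAt.deriv
  apply HasDerivAt.fun_sum
  intro k _
  have h1 := (hasDerivAt_pow (2*k) pr).div_const (r^(2*(n-k)))
  have h2 : HasDerivAt (fun x : ℝ =>
      g * S * pφ - 2*((n:ℝ)-k)/(2*k+1) * (g * C + b - a) * r * x)
      (-(2*((n:ℝ)-k)/(2*k+1) * (g * C + b - a) * r)) pr :=
    (hasDerivAt_lin (2*((n:ℝ)-k)/(2*k+1) * (g * C + b - a) * r) pr).const_sub (g * S * pφ)
  have h3 := (h1.const_mul ((-1:ℝ)^k * ((2*n).choose (2*k) : ℝ) * (2*g)^(n-k))).fun_mul h2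
  have heq : (fun x : ℝ =>
      (-1 : ℝ) ^ k * ((2 * n).choose (2 * k) : ℝ) * (2 * g) ^ (n - k)
        * (x ^ (2 * k) / r ^ (2 * (n - k)))
        * (g * S * pφ - 2 * ((n : ℝ) - k) / (2 * k + 1) * (g * C + b - a) * r * x))
      = (fun x : ℝ =>
      ((-1 : ℝ) ^ k * ((2 * n).choose (2 * k) : ℝ) * (2 * g) ^ (n - k)
        * (x ^ (2 * k) / r ^ (2 * (n - k))))
        * (g * S * pφ - 2 * ((n : ℝ) - k) / (2 * k + 1) * (g * C + b - a) * r * x)) := by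
    funext x; ring
  rw [heq]
  refine h3.congr_deriv ?_
  all_goals (simp only [ttwV1pr, ttwW, ttwE]; try ring)

lemma derivF2_pr (n : ℕ) (a b r φ pr pφ : ℝ) (g S C : ℝ) :
    deriv (fun x => ∑ k ∈ Finset.range (n + 1),
      (-1 : ℝ) ^ k * ((2 * n).choose (2 * k) : ℝ) * (2 * g) ^ (n - k)
        * (x ^ (2 * k) / r ^ (2 * (n - k)))
        * (2 * ((n : ℝ) - k) / (2 * k + 1) * S * r * x * pφ
            + 2 * (g * C + b - a))) pr
    = ∑ k ∈ Finset.range (n + 1), ttwV2pr n k g S C a b r pr pφ := by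
  apply HasDerivAt.deriv
  apply HasDerivAt.fun_sum
  intro k _
  have h1 := (hasDerivAt_pow (2*k) pr).div_const (r^(2*(n-k)))
  have h2 : HasDerivAt (fun x : ℝ =>
      2*((n:ℝ)-k)/(2*k+1) * S * r * x * pφ + 2 * (g * C + b - a))
      (2*((n:ℝ)-k)/(2*k+1) * S * r * pφ) pr := by
    have := ((hasDerivAt_lin (2*((n:ℝ)-k)/(2*k+1) * S * r) pr).mul_const pφ).add_const
      (2 * (g * C + b - a))
    convert this using 1
    all_goals ring
  have h3 := (h1.const_mul ((-1:ℝ)^k * ((2*n).choose (2*k) : ℝ) * (2*g)^(n-k))).fun_mul h2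
  have heq : (fun x : ℝ =>
      (-1 : ℝ) ^ k * ((2 * n).choose (2 * k) : ℝ) * (2 * g) ^ (n - k)
        * (x ^ (2 * k) / r ^ (2 * (n - k)))
        * (2 * ((n : ℝ) - k) / (2 * k + 1) * S * r * x * pφ + 2 * (g * C + b - a)))
      = (fun x : ℝ =>
      ((-1 : ℝ) ^ k * ((2 * n).choose (2 * k) : ℝ) * (2 * g) ^ (n - k)
        * (x ^ (2 * k) / r ^ (2 * (n - k))))
        * (2 * ((n : ℝ) - k) / (2 * k + 1) * S * r * x * pφ + 2 * (g * C + b - a))) := by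
    funext x; ring
  rw [heq]
  refine h3.congr_deriv ?_
  all_goals (simp only [ttwV2pr, ttwW, ttwE]; try ring)

noncomputable def ttwg (n : ℕ) (a b φ pφ : ℝ) : ℝ :=
  (1 / 2) * pφ ^ 2 + a / Real.cos (n*φ) ^ 2 + b / Real.sin (n*φ) ^ 2
noncomputable def ttwg' (n : ℕ) (a b φ : ℝ) : ℝ :=
  2*n*(a*Real.sin (n*φ)/Real.cos (n*φ)^3 - b*Real.cos (n*φ)/Real.sin (n*φ)^3)

lemma derivF1_pphi (n : ℕ) (a b r φ pr pφ : ℝ) :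
    deriv (fun x => ∑ k ∈ Finset.range (n + 1),
      (-1 : ℝ) ^ k * ((2 * n).choose (2 * k) : ℝ)
        * (2 * ((1 / 2) * x ^ 2 + a / Real.cos (n*φ) ^ 2 + b / Real.sin (n*φ) ^ 2)) ^ (n - k)
        * (pr ^ (2 * k) / r ^ (2 * (n - k)))
        * (((1 / 2) * x ^ 2 + a / Real.cos (n*φ) ^ 2 + b / Real.sin (n*φ) ^ 2)
              * Real.sin (2 * n * φ) * x
            - 2 * ((n : ℝ) - k) / (2 * k + 1)
              * (((1 / 2) * x ^ 2 + a / Real.cos (n*φ) ^ 2 + b / Real.sin (n*φ) ^ 2)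
                  * Real.cos (2 * n * φ) + b - a) * r * pr)) pφ
    = ∑ k ∈ Finset.range (n + 1), ttwV1pphi n k (ttwg n a b φ pφ)
        (Real.sin (2*n*φ)) (Real.cos (2*n*φ)) a b r pr pφ := by
  apply HasDerivAt.deriv
  apply HasDerivAt.fun_sum
  intro k _
  have hGp := hasDerivAt_Gp n a b φ pφ
  have hP := (hGp.const_mul (2:ℝ)).fun_pow (n-k)
  have hMa := (hGp.mul_const (Real.sin (2*n*φ))).fun_mul (hasDerivAt_id pφ)
  have hB := ((hGp.mul_const (Real.cos (2*n*φ))).add_const b).sub_const a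
  have hB2 := ((hB.const_mul (2*((n:ℝ)-k)/(2*k+1))).mul_const r).mul_const pr
  have hM := hMa.fun_sub hB2
  have h3 := ((hP.const_mul ((-1:ℝ)^k * ((2*n).choose (2*k) : ℝ))).mul_const
    (pr ^ (2*k) / r ^ (2*(n-k)))).fun_mul hM
  refine h3.congr_deriv ?_
  all_goals (simp only [ttwV1pphi, ttwW, ttwE, ttwg, id_eq]; try ring)

lemma derivF2_pphi (n : ℕ) (a b r φ pr pφ : ℝ) :
    deriv (fun x => ∑ k ∈ Finset.range (n + 1),
      (-1 : ℝ) ^ k * ((2 * n).choose (2 * k) : ℝ)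
        * (2 * ((1 / 2) * x ^ 2 + a / Real.cos (n*φ) ^ 2 + b / Real.sin (n*φ) ^ 2)) ^ (n - k)
        * (pr ^ (2 * k) / r ^ (2 * (n - k)))
        * (2 * ((n : ℝ) - k) / (2 * k + 1) * Real.sin (2 * n * φ) * r * pr * x
            + 2 * (((1 / 2) * x ^ 2 + a / Real.cos (n*φ) ^ 2 + b / Real.sin (n*φ) ^ 2)
                * Real.cos (2 * n * φ) + b - a))) pφ
    = ∑ k ∈ Finset.range (n + 1), ttwV2pphi n k (ttwg n a b φ pφ)
        (Real.sin (2*n*φ)) (Real.cos (2*n*φ)) a b r pr pφ := by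
  apply HasDerivAt.deriv
  apply HasDerivAt.fun_sum
  intro k _
  have hGp := hasDerivAt_Gp n a b φ pφ
  have hP := (hGp.const_mul (2:ℝ)).fun_pow (n-k)
  have hMa := hasDerivAt_lin (2*((n:ℝ)-k)/(2*k+1) * Real.sin (2*n*φ) * r * pr) pφ
  have hB := ((hGp.mul_const (Real.cos (2*n*φ))).add_const b).sub_const a
  have hM := hMa.fun_add (hB.const_mul 2)
  have h3 := ((hP.const_mul ((-1:ℝ)^k * ((2*n).choose (2*k) : ℝ))).mul_const
    (pr ^ (2*k) / r ^ (2*(n-k)))).fun_mul hM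
  refine h3.congr_deriv ?_
  all_goals (simp only [ttwV2pphi, ttwW, ttwE, ttwg, id_eq]; try ring)

lemma derivF1_phi (n : ℕ) (a b r φ pr pφ : ℝ) (hc : Real.cos (n*φ) ≠ 0)
    (hs : Real.sin (n*φ) ≠ 0) :
    deriv (fun x => ∑ k ∈ Finset.range (n + 1),
      (-1 : ℝ) ^ k * ((2 * n).choose (2 * k) : ℝ)
        * (2 * ((1 / 2) * pφ ^ 2 + a / Real.cos (n*x) ^ 2 + b / Real.sin (n*x) ^ 2)) ^ (n - k)
        * (pr ^ (2 * k) / r ^ (2 * (n - k)))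
        * (((1 / 2) * pφ ^ 2 + a / Real.cos (n*x) ^ 2 + b / Real.sin (n*x) ^ 2)
              * Real.sin (2 * n * x) * pφ
            - 2 * ((n : ℝ) - k) / (2 * k + 1)
              * (((1 / 2) * pφ ^ 2 + a / Real.cos (n*x) ^ 2 + b / Real.sin (n*x) ^ 2)
                  * Real.cos (2 * n * x) + b - a) * r * pr)) φ
    = ∑ k ∈ Finset.range (n + 1), ttwV1phi n k (ttwg n a b φ pφ) (ttwg' n a b φ)
        (Real.sin (2*n*φ)) (Real.cos (2*n*φ)) a b r pr pφ := by
  apply HasDerivAt.deriv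
  apply HasDerivAt.fun_sum
  intro k _
  have hG := hasDerivAt_G n a b pφ φ hc hs
  have hS := hasDerivAt_S n φ
  have hC := hasDerivAt_C n φ
  have hP := (hG.const_mul (2:ℝ)).fun_pow (n-k)
  have hMa := (hG.fun_mul hS).mul_const pφ
  have hB := ((hG.fun_mul hC).add_const b).sub_const a
  have hB2 := ((hB.const_mul (2*((n:ℝ)-k)/(2*k+1))).mul_const r).mul_const pr
  have hM := hMa.fun_sub hB2
  have h3 := ((hP.const_mul ((-1:ℝ)^k * ((2*n).choose (2*k) : ℝ))).mul_const
    (pr ^ (2*k) / r ^ (2*(n-k)))).fun_mul hM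
  refine h3.congr_deriv ?_
  all_goals (simp only [ttwV1phi, ttwW, ttwE, ttwg, ttwg']; try ring)

lemma derivF2_phi (n : ℕ) (a b r φ pr pφ : ℝ) (hc : Real.cos (n*φ) ≠ 0)
    (hs : Real.sin (n*φ) ≠ 0) :
    deriv (fun x => ∑ k ∈ Finset.range (n + 1),
      (-1 : ℝ) ^ k * ((2 * n).choose (2 * k) : ℝ)
        * (2 * ((1 / 2) * pφ ^ 2 + a / Real.cos (n*x) ^ 2 + b / Real.sin (n*x) ^ 2)) ^ (n - k)
        * (pr ^ (2 * k) / r ^ (2 * (n - k)))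
        * (2 * ((n : ℝ) - k) / (2 * k + 1) * Real.sin (2 * n * x) * r * pr * pφ
            + 2 * (((1 / 2) * pφ ^ 2 + a / Real.cos (n*x) ^ 2 + b / Real.sin (n*x) ^ 2)
                * Real.cos (2 * n * x) + b - a))) φ
    = ∑ k ∈ Finset.range (n + 1), ttwV2phi n k (ttwg n a b φ pφ) (ttwg' n a b φ)
        (Real.sin (2*n*φ)) (Real.cos (2*n*φ)) a b r pr pφ := by
  apply HasDerivAt.deriv
  apply HasDerivAt.fun_sum
  intro k _
  have hG := hasDerivAt_G n a b pφ φ hc hs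
  have hS := hasDerivAt_S n φ
  have hC := hasDerivAt_C n φ
  have hP := (hG.const_mul (2:ℝ)).fun_pow (n-k)
  have hMa := (((hS.const_mul (2*((n:ℝ)-k)/(2*k+1))).mul_const r).mul_const pr).mul_const pφ
  have hB := ((hG.fun_mul hC).add_const b).sub_const a
  have hM := hMa.fun_add (hB.const_mul 2)
  have h3 := ((hP.const_mul ((-1:ℝ)^k * ((2*n).choose (2*k) : ℝ))).mul_const
    (pr ^ (2*k) / r ^ (2*(n-k)))).fun_mul hM
  refine h3.congr_deriv ?_
  all_goals (simp only [ttwV2phi, ttwW, ttwE, ttwg, ttwg']; try ring)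

lemma derivH_r (n : ℕ) (a b r φ pr pφ : ℝ) (hr : r ≠ 0) (hc : Real.cos (n*φ) ≠ 0)
    (hs : Real.sin (n*φ) ≠ 0) :
    deriv (fun x => (1 / 2) * (pr ^ 2 + pφ ^ 2 / x ^ 2) + a / (x ^ 2 * Real.cos (n*φ) ^ 2)
        + b / (x ^ 2 * Real.sin (n*φ) ^ 2)) r
    = -(2 * ttwg n a b φ pφ) / r ^ 3 := by
  apply HasDerivAt.deriv
  have h1 := ((hasDerivAt_invpow 2 (pφ^2) r hr).const_add (pr^2)).const_mul ((1:ℝ)/2)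
  have h2 := (hasDerivAt_const r a).fun_div ((hasDerivAt_pow 2 r).mul_const (Real.cos (n*φ)^2))
    (mul_ne_zero (pow_ne_zero 2 hr) (pow_ne_zero 2 hc))
  have h3 := (hasDerivAt_const r b).fun_div ((hasDerivAt_pow 2 r).mul_const (Real.sin (n*φ)^2))
    (mul_ne_zero (pow_ne_zero 2 hr) (pow_ne_zero 2 hs))
  have h4 := (h1.fun_add h2).fun_add h3
  refine h4.congr_deriv ?_
  simp only [ttwg]
  field_simp
  ring

lemma derivH_pr (n : ℕ) (a b r φ pr pφ : ℝ) :
    deriv (fun x => (1 / 2) * (x ^ 2 + pφ ^ 2 / r ^ 2) + a / (r ^ 2 * Real.cos (n*φ) ^ 2)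
        + b / (r ^ 2 * Real.sin (n*φ) ^ 2)) pr = pr := by
  apply HasDerivAt.deriv
  have h1 := ((((hasDerivAt_pow 2 pr).add_const (pφ^2/r^2)).const_mul ((1:ℝ)/2)).add_const
    (a / (r ^ 2 * Real.cos (n*φ) ^ 2))).add_const (b / (r ^ 2 * Real.sin (n*φ) ^ 2))
  convert h1 using 1
  ring

lemma derivH_pphi (n : ℕ) (a b r φ pr pφ : ℝ) :
    deriv (fun x => (1 / 2) * (pr ^ 2 + x ^ 2 / r ^ 2) + a / (r ^ 2 * Real.cos (n*φ) ^ 2)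
        + b / (r ^ 2 * Real.sin (n*φ) ^ 2)) pφ = pφ / r ^ 2 := by
  apply HasDerivAt.deriv
  have h1 := (((((hasDerivAt_pow 2 pφ).div_const (r^2)).const_add (pr^2)).const_mul
    ((1:ℝ)/2)).add_const (a / (r ^ 2 * Real.cos (n*φ) ^ 2))).add_const
    (b / (r ^ 2 * Real.sin (n*φ) ^ 2))
  convert h1 using 1
  ring

lemma derivH_phi (n : ℕ) (a b r φ pr pφ : ℝ) (hr : r ≠ 0) (hc : Real.cos (n*φ) ≠ 0)
    (hs : Real.sin (n*φ) ≠ 0) :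
    deriv (fun x => (1 / 2) * (pr ^ 2 + pφ ^ 2 / r ^ 2) + a / (r ^ 2 * Real.cos (n*x) ^ 2)
        + b / (r ^ 2 * Real.sin (n*x) ^ 2)) φ
    = ttwg' n a b φ / r ^ 2 := by
  apply HasDerivAt.deriv
  have hlin : HasDerivAt (fun x : ℝ => (n:ℝ)*x) n φ := hasDerivAt_lin _ _
  have hcos : HasDerivAt (fun x => Real.cos (n*x)) (-Real.sin (n*φ) * n) φ :=
    (Real.hasDerivAt_cos ((n:ℝ)*φ)).comp φ hlin
  have hsin : HasDerivAt (fun x => Real.sin (n*x)) (Real.cos (n*φ) * n) φ :=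
    (Real.hasDerivAt_sin ((n:ℝ)*φ)).comp φ hlin
  have h2 := (hasDerivAt_const φ a).fun_div ((hcos.fun_pow 2).const_mul (r^2))
    (mul_ne_zero (pow_ne_zero 2 hr) (pow_ne_zero 2 hc))
  have h3 := (hasDerivAt_const φ b).fun_div ((hsin.fun_pow 2).const_mul (r^2))
    (mul_ne_zero (pow_ne_zero 2 hr) (pow_ne_zero 2 hs))
  have h4 := (h2.const_add ((1 / 2) * (pr ^ 2 + pφ ^ 2 / r ^ 2))).fun_add h3
  refine h4.congr_deriv ?_
  simp only [ttwg']
  field_simp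
  ring

noncomputable def ttwc1 (n k : ℕ) (g S C a b r pr pφ : ℝ) : ℝ :=
  -pr * ttwV1r n k g S C a b r pr pφ
  + (-(2*(n:ℝ))*ttwE n k*g*S*pφ*r*pr)
      * (ttwW n k * (2*g)^(n-k) * (pr^(2*k)/r^(2*(n-k))))/r^2

noncomputable def ttwd1 (n k : ℕ) (g S C a b r pr pφ : ℝ) : ℝ :=
  -(2*g)/r^3 * ttwV1pr n k g S C a b r pr pφ
  + (-(4*(n:ℝ))*g*(g*C+b-a))
      * (ttwW n k * (2*g)^(n-k) * (pr^(2*k)/r^(2*(n-k))))/r^2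

lemma perk1 (n k : ℕ) (g g' S C a b r pr pφ : ℝ)
    (hid : g'*S = 2*(n:ℝ)*C*pφ^2 - 4*n*(g*C+b-a)) :
    -(2*g)/r^3 * ttwV1pr n k g S C a b r pr pφ - pr * ttwV1r n k g S C a b r pr pφ
      + g'/r^2 * ttwV1pphi n k g S C a b r pr pφ
      - pφ/r^2 * ttwV1phi n k g g' S C a b r pr pφ
    = ttwc1 n k g S C a b r pr pφ + ttwd1 n k g S C a b r pr pφ := by
  simp only [ttwc1, ttwd1, ttwV1pr, ttwV1r, ttwV1pphi, ttwV1phi, ttwW, ttwE]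
  linear_combination ((-1:ℝ)^k * ((2*n).choose (2*k):ℝ) * (2*g)^(n-k)
    * (pr^(2*k)/r^(2*(n-k))) * g / r^2) * hid

lemma d1zero (n : ℕ) (g S C a b r pr pφ : ℝ) (hr : r ≠ 0) :
    ttwd1 n 0 g S C a b r pr pφ = 0 := by
  simp only [ttwd1, ttwV1pr, ttwW, ttwE]
  norm_num
  field_simp
  ring

lemma c1last (n : ℕ) (g S C a b r pr pφ : ℝ) :
    ttwc1 n n g S C a b r pr pφ = 0 := by
  simp only [ttwc1, ttwV1r, ttwW, ttwE, Nat.sub_self, sub_self]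
  norm_num

lemma choose_cast (j m : ℕ) :
    (((2*(j+m+1)).choose (2*j+2)):ℝ) * ((2*(j:ℝ)+1)*(2*j+2))
    = (((2*(j+m+1)).choose (2*j)):ℝ) * ((2*(m:ℝ)+2)*(2*m+1)) := by
  have h1 := Nat.choose_succ_right_eq (2*(j+m+1)) (2*j+1)
  have h2 := Nat.choose_succ_right_eq (2*(j+m+1)) (2*j)
  rw [show 2*j+1+1 = 2*j+2 from rfl] at h1
  rw [show 2*(j+m+1) - (2*j+1) = 2*m+1 from by omega] at h1
  rw [show 2*(j+m+1) - 2*j = 2*m+2 from by omega] at h2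
  have h1' := congrArg (Nat.cast (R := ℝ)) h1
  have h2' := congrArg (Nat.cast (R := ℝ)) h2
  push_cast at h1' h2'
  nlinarith [h1', h2']

lemma d1succ (n j : ℕ) (hj : j < n) (g S C a b r pr pφ : ℝ) (hr : r ≠ 0) :
    ttwd1 n (j+1) g S C a b r pr pφ = - ttwc1 n j g S C a b r pr pφ := by
  obtain ⟨m, rfl⟩ : ∃ m, n = j + m + 1 := ⟨n - j - 1, by omega⟩
  simp only [ttwd1, ttwc1, ttwV1pr, ttwV1r, ttwW, ttwE]
  rw [show j+m+1 - (j+1) = m from by omega, show j+m+1 - j = m+1 from by omega,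
      show 2*(j+1)-1 = 2*j+1 from by omega, show 2*(j+1) = 2*j+2 from by omega]
  have hch : (((2*(j+m+1)).choose (2*j+2)):ℝ)
      = (((2*(j+m+1)).choose (2*j)):ℝ) * ((2*(m:ℝ)+2)*(2*m+1)) / ((2*(j:ℝ)+1)*(2*j+2)) := by
    rw [eq_div_iff (by positivity)]
    exact choose_cast j m
  rw [hch]
  have h1 : (2*(j:ℝ)+1) ≠ 0 := by positivity
  have h2 : (2*(j:ℝ)+2) ≠ 0 := by positivity
  have h3 : (2*((j:ℕ):ℝ)+2+1) ≠ 0 := by positivity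
  push_cast
  field_simp
  ring

noncomputable def ttwc2 (n k : ℕ) (g S C a b r pr pφ : ℝ) : ℝ :=
  -pr * ttwV2r n k g S C a b r pr pφ
  + (-(4*(n:ℝ))*ttwE n k*(g*C+b-a)*r*pr)
      * (ttwW n k * (2*g)^(n-k) * (pr^(2*k)/r^(2*(n-k))))/r^2

noncomputable def ttwd2 (n k : ℕ) (g S C a b r pr pφ : ℝ) : ℝ :=
  -(2*g)/r^3 * ttwV2pr n k g S C a b r pr pφ
  + (4*(n:ℝ)*g*S*pφ)
      * (ttwW n k * (2*g)^(n-k) * (pr^(2*k)/r^(2*(n-k))))/r^2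

lemma perk2 (n k : ℕ) (g g' S C a b r pr pφ : ℝ)
    (hid : g'*S = 2*(n:ℝ)*C*pφ^2 - 4*n*(g*C+b-a)) :
    -(2*g)/r^3 * ttwV2pr n k g S C a b r pr pφ - pr * ttwV2r n k g S C a b r pr pφ
      + g'/r^2 * ttwV2pphi n k g S C a b r pr pφ
      - pφ/r^2 * ttwV2phi n k g g' S C a b r pr pφ
    = ttwc2 n k g S C a b r pr pφ + ttwd2 n k g S C a b r pr pφ := by
  simp only [ttwc2, ttwd2, ttwV2pr, ttwV2r, ttwV2pphi, ttwV2phi, ttwW, ttwE]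
  linear_combination ((-1:ℝ)^k * ((2*n).choose (2*k):ℝ) * (2*g)^(n-k)
    * (pr^(2*k)/r^(2*(n-k))) * (2*((n:ℝ)-k)/(2*k+1)) * r * pr / r^2) * hid

lemma d2zero (n : ℕ) (g S C a b r pr pφ : ℝ) (hr : r ≠ 0) :
    ttwd2 n 0 g S C a b r pr pφ = 0 := by
  simp only [ttwd2, ttwV2pr, ttwW, ttwE]
  norm_num
  field_simp
  ring

lemma c2last (n : ℕ) (g S C a b r pr pφ : ℝ) :
    ttwc2 n n g S C a b r pr pφ = 0 := by
  simp only [ttwc2, ttwV2r, ttwW, ttwE, Nat.sub_self, sub_self]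
  norm_num

lemma d2succ (n j : ℕ) (hj : j < n) (g S C a b r pr pφ : ℝ) (hr : r ≠ 0) :
    ttwd2 n (j+1) g S C a b r pr pφ = - ttwc2 n j g S C a b r pr pφ := by
  obtain ⟨m, rfl⟩ : ∃ m, n = j + m + 1 := ⟨n - j - 1, by omega⟩
  simp only [ttwd2, ttwc2, ttwV2pr, ttwV2r, ttwW, ttwE]
  rw [show j+m+1 - (j+1) = m from by omega, show j+m+1 - j = m+1 from by omega,
      show 2*(j+1)-1 = 2*j+1 from by omega, show 2*(j+1) = 2*j+2 from by omega]
  have hch : (((2*(j+m+1)).choose (2*j+2)):ℝ)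
      = (((2*(j+m+1)).choose (2*j)):ℝ) * ((2*(m:ℝ)+2)*(2*m+1)) / ((2*(j:ℝ)+1)*(2*j+2)) := by
    rw [eq_div_iff (by positivity)]
    exact choose_cast j m
  rw [hch]
  have h1 : (2*(j:ℝ)+1) ≠ 0 := by positivity
  have h2 : (2*(j:ℝ)+2) ≠ 0 := by positivity
  have h3 : (2*((j:ℕ):ℝ)+2+1) ≠ 0 := by positivity
  push_cast
  field_simp
  ring

lemma sum_cancel (n : ℕ) (c d : ℕ → ℝ) (h0 : d 0 = 0) (hn : c n = 0)
    (hstep : ∀ j, j < n → d (j+1) = - c j) :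
    ∑ k ∈ Finset.range (n+1), (c k + d k) = 0 := by
  rw [Finset.sum_add_distrib]
  rw [Finset.sum_range_succ (f := c), hn, add_zero]
  rw [Finset.sum_range_succ' (f := d), h0, add_zero]
  have : ∑ j ∈ Finset.range n, d (j+1) = ∑ j ∈ Finset.range n, - c j :=
    Finset.sum_congr rfl fun j hj => hstep j (Finset.mem_range.mp hj)
  rw [this, Finset.sum_neg_distrib]
  ring

lemma ttw_hid (n : ℕ) (a b φ pφ : ℝ) (hc : Real.cos (n*φ) ≠ 0)
    (hs : Real.sin (n*φ) ≠ 0) :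
    (2*(n:ℝ)*(a*Real.sin (n*φ)/Real.cos (n*φ)^3 - b*Real.cos (n*φ)/Real.sin (n*φ)^3))
        * Real.sin (2*n*φ)
    = 2*(n:ℝ)*Real.cos (2*n*φ)*pφ^2
      - 4*n*(((1 / 2) * pφ ^ 2 + a / Real.cos (n*φ) ^ 2 + b / Real.sin (n*φ) ^ 2)
          * Real.cos (2*n*φ) + b - a) := by
  have h2 : (2*(n:ℝ)*φ) = 2*((n:ℝ)*φ) := by ring
  rw [h2, Real.sin_two_mul, Real.cos_two_mul]
  have hpy := Real.sin_sq_add_cos_sq ((n:ℝ)*φ)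
  field_simp
  linear_combination (8*(n:ℝ)*Real.cos ((n:ℝ)*φ)^2*b
    + 8*(n:ℝ)*Real.sin ((n:ℝ)*φ)^2*a) * hpy

lemma ttw_hid2 (n : ℕ) (a b φ pφ : ℝ) (hc : Real.cos (n*φ) ≠ 0)
    (hs : Real.sin (n*φ) ≠ 0) :
    ttwg' n a b φ * Real.sin (2*n*φ)
    = 2*(n:ℝ)*Real.cos (2*n*φ)*pφ^2
      - 4*n*(ttwg n a b φ pφ * Real.cos (2*n*φ) + b - a) := by
  simp only [ttwg, ttwg']
  exact ttw_hid n a b φ pφ hc hs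

/-- For the TTW Hamiltonian
`H = (1/2)(p_r² + p_φ²/r²) + a/(r² cos²(nφ)) + b/(r² sin²(nφ))` with
`G = (1/2)p_φ² + a/cos²(nφ) + b/sin²(nφ)`, the functions `F₁`, `F₂` below are first
integrals of `H` on the open set where `r > 0`, `cos(nφ) ≠ 0`, `sin(nφ) ≠ 0`, `G > 0`. -/
theorem ttw_additional_integrals (n : ℕ) (hn : 0 < n) (a b : ℝ)
    (H G F₁ F₂ : ℝ → ℝ → ℝ → ℝ → ℝ)
    (hH : H = fun r φ pr pφ =>
      (1 / 2) * (pr ^ 2 + pφ ^ 2 / r ^ 2) + a / (r ^ 2 * Real.cos (n * φ) ^ 2)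
        + b / (r ^ 2 * Real.sin (n * φ) ^ 2))
    (hG : G = fun _r φ _pr pφ =>
      (1 / 2) * pφ ^ 2 + a / Real.cos (n * φ) ^ 2 + b / Real.sin (n * φ) ^ 2)
    (hF₁ : F₁ = fun r φ pr pφ =>
      ∑ k ∈ Finset.range (n + 1),
        (-1 : ℝ) ^ k * ((2 * n).choose (2 * k) : ℝ)
          * (2 * G r φ pr pφ) ^ (n - k)
          * (pr ^ (2 * k) / r ^ (2 * (n - k)))
          * (G r φ pr pφ * Real.sin (2 * n * φ) * pφ
              - 2 * ((n : ℝ) - k) / (2 * k + 1)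
                * (G r φ pr pφ * Real.cos (2 * n * φ) + b - a) * r * pr))
    (hF₂ : F₂ = fun r φ pr pφ =>
      ∑ k ∈ Finset.range (n + 1),
        (-1 : ℝ) ^ k * ((2 * n).choose (2 * k) : ℝ)
          * (2 * G r φ pr pφ) ^ (n - k)
          * (pr ^ (2 * k) / r ^ (2 * (n - k)))
          * (2 * ((n : ℝ) - k) / (2 * k + 1) * Real.sin (2 * n * φ) * r * pr * pφ
              + 2 * (G r φ pr pφ * Real.cos (2 * n * φ) + b - a))) :
    ∀ r φ pr pφ : ℝ, 0 < r → Real.cos (n * φ) ≠ 0 → Real.sin (n * φ) ≠ 0 →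
      0 < G r φ pr pφ →
      poissonBracket H F₁ r φ pr pφ = 0 ∧ poissonBracket H F₂ r φ pr pφ = 0 := by
  subst hG hH hF₁ hF₂
  intro r φ pr pφ hr hc hs _hG
  have hr' : r ≠ 0 := ne_of_gt hr
  have hid := ttw_hid2 n a b φ pφ hc hs
  constructor
  · simp only [poissonBracket]
    rw [derivH_r n a b r φ pr pφ hr' hc hs, derivH_pr n a b r φ pr pφ,
        derivH_phi n a b r φ pr pφ hr' hc hs, derivH_pphi n a b r φ pr pφ,
        derivF1_pr n a b r φ pr pφ
          ((1 / 2) * pφ ^ 2 + a / Real.cos (n * φ) ^ 2 + b / Real.sin (n * φ) ^ 2)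
          (Real.sin (2 * n * φ)) (Real.cos (2 * n * φ)),
        derivF1_r n a b r φ pr pφ hr'
          ((1 / 2) * pφ ^ 2 + a / Real.cos (n * φ) ^ 2 + b / Real.sin (n * φ) ^ 2)
          (Real.sin (2 * n * φ)) (Real.cos (2 * n * φ)),
        derivF1_pphi n a b r φ pr pφ, derivF1_phi n a b r φ pr pφ hc hs]
    rw [show (1 / 2) * pφ ^ 2 + a / Real.cos (n * φ) ^ 2 + b / Real.sin (n * φ) ^ 2
        = ttwg n a b φ pφ from rfl]
    rw [Finset.mul_sum, Finset.mul_sum, Finset.mul_sum, Finset.mul_sum,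
        ← Finset.sum_sub_distrib, ← Finset.sum_add_distrib, ← Finset.sum_sub_distrib]
    rw [Finset.sum_congr rfl (fun k _ => perk1 n k (ttwg n a b φ pφ) (ttwg' n a b φ)
      (Real.sin (2 * n * φ)) (Real.cos (2 * n * φ)) a b r pr pφ hid)]
    exact sum_cancel n _ _ (d1zero n _ _ _ a b r pr pφ hr') (c1last n _ _ _ a b r pr pφ)
      (fun j hj => d1succ n j hj _ _ _ a b r pr pφ hr')
  · simp only [poissonBracket]
    rw [derivH_r n a b r φ pr pφ hr' hc hs, derivH_pr n a b r φ pr pφ,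
        derivH_phi n a b r φ pr pφ hr' hc hs, derivH_pphi n a b r φ pr pφ,
        derivF2_pr n a b r φ pr pφ
          ((1 / 2) * pφ ^ 2 + a / Real.cos (n * φ) ^ 2 + b / Real.sin (n * φ) ^ 2)
          (Real.sin (2 * n * φ)) (Real.cos (2 * n * φ)),
        derivF2_r n a b r φ pr pφ hr'
          ((1 / 2) * pφ ^ 2 + a / Real.cos (n * φ) ^ 2 + b / Real.sin (n * φ) ^ 2)
          (Real.sin (2 * n * φ)) (Real.cos (2 * n * φ)),
        derivF2_pphi n a b r φ pr pφ, derivF2_phi n a b r φ pr pφ hc hs]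
    rw [show (1 / 2) * pφ ^ 2 + a / Real.cos (n * φ) ^ 2 + b / Real.sin (n * φ) ^ 2
        = ttwg n a b φ pφ from rfl]
    rw [Finset.mul_sum, Finset.mul_sum, Finset.mul_sum, Finset.mul_sum,
        ← Finset.sum_sub_distrib, ← Finset.sum_add_distrib, ← Finset.sum_sub_distrib]
    rw [Finset.sum_congr rfl (fun k _ => perk2 n k (ttwg n a b φ pφ) (ttwg' n a b φ)
      (Real.sin (2 * n * φ)) (Real.cos (2 * n * φ)) a b r pr pφ hid)]
    exact sum_cancel n _ _ (d2zero n _ _ _ a b r pr pφ hr') (c2last n _ _ _ a b r pr pφ)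
      (fun j hj => d2succ n j hj _ _ _ a b r pr pφ hr')
end

section
/- Let n be a positive integer and a,b real parameters. Consider the Hamiltonian with indefinite kinetic energy H = (1/2)(p_r² − p_φ²/r²) + a/(r² cosh²(nφ)) + b/(r² sinh²(nφ)) and set G := (1/2)p_φ² − a/cosh²(nφ) − b/sinh²(nφ). Then on the open set where r > 0, sinh(nφ) ≠ 0 and G > 0, both I₁ := r^{−2n} (√(2G) − r p_r)^{2n} [ √(2G) sinh(2nφ) p_φ + 2 (G cosh(2nφ) + a + b) ] and I₂ := r^{−2n} (√(2G) + r p_r)^{2n} [ √(2G) sinh(2nφ) p_φ − 2 (G cosh(2nφ) + a + b) ] are first integrals of H: {H,I₁} = 0 and {H,I₂} = 0 (and so is G itself: {H,G} = 0). -/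
set_option maxHeartbeats 2000000 in
/-- For the indefinite-kinetic-energy Hamiltonian
`H = (1/2)(p_r² - p_φ²/r²) + a/(r² cosh²(nφ)) + b/(r² sinh²(nφ))` with
`G = (1/2)p_φ² - a/cosh²(nφ) - b/sinh²(nφ)`, the functions
`I₁ = r^{-2n} (√(2G) - r p_r)^{2n} [√(2G) sinh(2nφ) p_φ + 2(G cosh(2nφ) + a + b)]` and
`I₂ = r^{-2n} (√(2G) + r p_r)^{2n} [√(2G) sinh(2nφ) p_φ - 2(G cosh(2nφ) + a + b)]`
are first integrals of `H` (and so is `G`) on the open set where `r > 0`,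
`sinh(nφ) ≠ 0` and `G > 0`. -/
theorem indefinite_ttw_additional_integrals (n : ℕ) (hn : 0 < n) (a b : ℝ)
    (H G I₁ I₂ : ℝ → ℝ → ℝ → ℝ → ℝ)
    (hH : H = fun r φ pr pφ =>
      (1 / 2) * (pr ^ 2 - pφ ^ 2 / r ^ 2) + a / (r ^ 2 * Real.cosh (n * φ) ^ 2)
        + b / (r ^ 2 * Real.sinh (n * φ) ^ 2))
    (hG : G = fun _r φ _pr pφ =>
      (1 / 2) * pφ ^ 2 - a / Real.cosh (n * φ) ^ 2 - b / Real.sinh (n * φ) ^ 2)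
    (hI₁ : I₁ = fun r φ pr pφ =>
      r ^ (-(2 * n : ℤ)) * (Real.sqrt (2 * G r φ pr pφ) - r * pr) ^ (2 * n)
        * (Real.sqrt (2 * G r φ pr pφ) * Real.sinh (2 * n * φ) * pφ
            + 2 * (G r φ pr pφ * Real.cosh (2 * n * φ) + a + b)))
    (hI₂ : I₂ = fun r φ pr pφ =>
      r ^ (-(2 * n : ℤ)) * (Real.sqrt (2 * G r φ pr pφ) + r * pr) ^ (2 * n)
        * (Real.sqrt (2 * G r φ pr pφ) * Real.sinh (2 * n * φ) * pφ
            - 2 * (G r φ pr pφ * Real.cosh (2 * n * φ) + a + b))) :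
    ∀ r φ pr pφ : ℝ, 0 < r → Real.sinh (n * φ) ≠ 0 → 0 < G r φ pr pφ →
      poissonBracket H I₁ r φ pr pφ = 0 ∧ poissonBracket H I₂ r φ pr pφ = 0 ∧
      poissonBracket H G r φ pr pφ = 0 := by
  subst hH hG hI₁ hI₂
  intro r φ pr pφ hr hsh hGpos
  simp only at hGpos
  have hr' : r ≠ 0 := ne_of_gt hr
  have hc : Real.cosh ((n:ℝ)*φ) ≠ 0 := (Real.cosh_pos _).ne'
  simp only [poissonBracket]
  rw [mul_assoc 2 (n:ℝ) φ, Real.cosh_two_mul, Real.sinh_two_mul]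
  set c := Real.cosh ((n:ℝ)*φ) with hcd
  set sh := Real.sinh ((n:ℝ)*φ) with hshd
  set g := 1 / 2 * pφ ^ 2 - a / c ^ 2 - b / sh ^ 2 with hgd
  set s := Real.sqrt (2*g) with hsd
  have hs2 : s^2 = 2*g := Real.sq_sqrt (by linarith)
  have hs0 : s ≠ 0 := by
    rw [hsd]; exact (Real.sqrt_pos.mpr (by linarith)).ne'
  have hg2 : (2:ℝ) * g ≠ 0 := by linarith
  -- derivative of x^2
  have hx2r : HasDerivAt (fun x : ℝ => x ^ 2) (2*r) r := by simpa using hasDerivAt_pow 2 r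
  -- H partial derivatives
  have dHr : deriv (fun x => 1 / 2 * (pr ^ 2 - pφ ^ 2 / x ^ 2) + a / (x ^ 2 * c ^ 2)
      + b / (x ^ 2 * sh ^ 2)) r = 2*g/r^3 := by
    have h := ((HasDerivAt.const_mul (1/2 : ℝ)
        ((hasDerivAt_const r (pr^2)).sub
          ((hasDerivAt_const r (pφ^2)).div hx2r (pow_ne_zero 2 hr')))).add
        ((hasDerivAt_const r a).div (hx2r.mul_const (c^2))
          (mul_ne_zero (pow_ne_zero 2 hr') (pow_ne_zero 2 hc)))).add
        ((hasDerivAt_const r b).div (hx2r.mul_const (sh^2))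
          (mul_ne_zero (pow_ne_zero 2 hr') (pow_ne_zero 2 hsh)))
    refine h.deriv.trans ?_
    rw [hgd]; field_simp; ring
  have dHpr : deriv (fun x => 1 / 2 * (x ^ 2 - pφ ^ 2 / r ^ 2) + a / (r ^ 2 * c ^ 2)
      + b / (r ^ 2 * sh ^ 2)) pr = pr := by
    have h := ((HasDerivAt.const_mul (1/2 : ℝ)
        ((hasDerivAt_pow 2 pr).sub_const (pφ^2/r^2))).add_const
        (a / (r ^ 2 * c ^ 2))).add_const (b / (r ^ 2 * sh ^ 2))
    refine h.deriv.trans ?_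
    push_cast; ring
  have hnx : HasDerivAt (fun x : ℝ => (n:ℝ)*x) ((n:ℝ)) φ := by
    simpa using (hasDerivAt_id φ).const_mul (n:ℝ)
  have hcosh := hnx.cosh
  have hsinh := hnx.sinh
  have dHφ : deriv (fun x => 1 / 2 * (pr ^ 2 - pφ ^ 2 / r ^ 2)
      + a / (r ^ 2 * Real.cosh ((n:ℝ) * x) ^ 2)
      + b / (r ^ 2 * Real.sinh ((n:ℝ) * x) ^ 2)) φ
      = (-(2*(n:ℝ)*a*sh/c^3) - 2*(n:ℝ)*b*c/sh^3)/r^2 := by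
    have h := ((hasDerivAt_const φ (1 / 2 * (pr ^ 2 - pφ ^ 2 / r ^ 2))).add
        ((hasDerivAt_const φ a).div ((hcosh.fun_pow 2).const_mul (r^2))
          (mul_ne_zero (pow_ne_zero 2 hr') (pow_ne_zero 2 hc)))).add
        ((hasDerivAt_const φ b).div ((hsinh.fun_pow 2).const_mul (r^2))
          (mul_ne_zero (pow_ne_zero 2 hr') (pow_ne_zero 2 hsh)))
    refine h.deriv.trans ?_
    rw [← hcd, ← hshd]; push_cast; field_simp; ring
  have dHpφ : deriv (fun x => 1 / 2 * (pr ^ 2 - x ^ 2 / r ^ 2) + a / (r ^ 2 * c ^ 2)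
      + b / (r ^ 2 * sh ^ 2)) pφ = -pφ/r^2 := by
    have h := ((HasDerivAt.const_mul (1/2 : ℝ)
        ((hasDerivAt_const pφ (pr^2)).sub
          ((hasDerivAt_pow 2 pφ).div_const (r^2)))).add_const
        (a / (r ^ 2 * c ^ 2))).add_const (b / (r ^ 2 * sh ^ 2))
    refine h.deriv.trans ?_
    push_cast; field_simp; ring
  -- G partial derivatives
  have dGφ : deriv (fun x => 1 / 2 * pφ ^ 2 - a / Real.cosh ((n:ℝ) * x) ^ 2
      - b / Real.sinh ((n:ℝ) * x) ^ 2) φ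
      = 2*(n:ℝ)*a*sh/c^3 + 2*(n:ℝ)*b*c/sh^3 := by
    have h := ((hasDerivAt_const φ (1 / 2 * pφ ^ 2)).sub
        ((hasDerivAt_const φ a).div (hcosh.fun_pow 2) (pow_ne_zero 2 hc))).sub
        ((hasDerivAt_const φ b).div (hsinh.fun_pow 2) (pow_ne_zero 2 hsh))
    refine h.deriv.trans ?_
    rw [← hcd, ← hshd]; push_cast; field_simp; ring
  have dGpφ : deriv (fun x => 1 / 2 * x ^ 2 - a / c ^ 2 - b / sh ^ 2) pφ = pφ := by
    have h := ((HasDerivAt.const_mul (1/2 : ℝ) (hasDerivAt_pow 2 pφ)).sub_const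
        (a / c ^ 2)).sub_const (b / sh ^ 2)
    refine h.deriv.trans ?_
    push_cast; ring
  refine ⟨?_, ?_, ?_⟩
  · have dI1pr : deriv (fun x => r ^ (-(2 * n : ℤ)) * (s - r * x) ^ (2 * n)
        * (s * (2 * sh * c) * pφ + 2 * (g * (c ^ 2 + sh ^ 2) + a + b))) pr
        = r ^ (-(2 * n : ℤ)) * (2*(n:ℝ) * (s - r*pr)^(2*n-1) * (-r))
          * (s * (2 * sh * c) * pφ + 2 * (g * (c ^ 2 + sh ^ 2) + a + b)) := by
      have h := (HasDerivAt.const_mul (r ^ (-(2 * n : ℤ)))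
          (((hasDerivAt_const pr s).fun_sub ((hasDerivAt_id pr).const_mul r)).fun_pow (2*n))).mul_const
          (s * (2 * sh * c) * pφ + 2 * (g * (c ^ 2 + sh ^ 2) + a + b))
      refine h.deriv.trans ?_
      simp only [id_eq]; push_cast; ring
    have dI1r : deriv (fun x => x ^ (-(2 * n : ℤ)) * (s - x * pr) ^ (2 * n)
        * (s * (2 * sh * c) * pφ + 2 * (g * (c ^ 2 + sh ^ 2) + a + b))) r
        = (-(2*(n:ℝ)) * r ^ (-(2 * n : ℤ)) / r * (s - r*pr)^(2*n)
           + r ^ (-(2 * n : ℤ)) * (2*(n:ℝ) * (s - r*pr)^(2*n-1) * (-pr)))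
          * (s * (2 * sh * c) * pφ + 2 * (g * (c ^ 2 + sh ^ 2) + a + b)) := by
      have h := ((hasDerivAt_zpow (-(2 * n : ℤ)) r (Or.inl hr')).fun_mul
          (((hasDerivAt_const r s).fun_sub ((hasDerivAt_id r).mul_const pr)).fun_pow (2*n))).mul_const
          (s * (2 * sh * c) * pφ + 2 * (g * (c ^ 2 + sh ^ 2) + a + b))
      refine h.deriv.trans ?_
      rw [zpow_sub_one₀ hr' (-(2 * n : ℤ))]
      generalize r ^ (-(2 * n : ℤ)) = R
      simp only [id_eq]; push_cast; ring
    have hgx : HasDerivAt (fun x : ℝ => 1 / 2 * x ^ 2 - a / c ^ 2 - b / sh ^ 2)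
        (1/2*(2*pφ)) pφ := by
      have h := ((HasDerivAt.const_mul (1/2 : ℝ) (hasDerivAt_pow 2 pφ)).sub_const
          (a / c ^ 2)).sub_const (b / sh ^ 2)
      refine h.congr_deriv ?_
      push_cast; ring
    have hsq := (HasDerivAt.const_mul (2:ℝ) hgx).sqrt hg2
    have dI1pp : deriv (fun x => r ^ (-(2 * n : ℤ))
        * (Real.sqrt (2 * (1 / 2 * x ^ 2 - a / c ^ 2 - b / sh ^ 2)) - r * pr) ^ (2 * n)
        * (Real.sqrt (2 * (1 / 2 * x ^ 2 - a / c ^ 2 - b / sh ^ 2)) * (2 * sh * c) * x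
            + 2 * ((1 / 2 * x ^ 2 - a / c ^ 2 - b / sh ^ 2) * (c ^ 2 + sh ^ 2) + a + b))) pφ
        = r ^ (-(2 * n : ℤ)) * (2*(n:ℝ) * (s - r*pr)^(2*n-1) * (pφ/s))
            * (s * (2 * sh * c) * pφ + 2 * (g * (c ^ 2 + sh ^ 2) + a + b))
          + r ^ (-(2 * n : ℤ)) * (s - r*pr)^(2*n)
            * (pφ/s * (2*sh*c) * pφ + s * (2*sh*c) + 2*pφ*(c^2+sh^2)) := by
      have h := (HasDerivAt.const_mul (r ^ (-(2 * n : ℤ)))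
          ((hsq.sub_const (r*pr)).fun_pow (2*n))).fun_mul
          (((hsq.mul_const (2*sh*c)).fun_mul (hasDerivAt_id pφ)).fun_add
            (HasDerivAt.const_mul (2:ℝ)
              (((hgx.mul_const (c^2+sh^2)).add_const a).add_const b)))
      refine h.deriv.trans ?_
      rw [← hgd, ← hsd]
      generalize (s - r*pr) ^ (2*n-1) = X
      generalize (s - r*pr) ^ (2*n) = Y
      try simp only [id_eq]
      push_cast
      field_simp
    have hgφ : HasDerivAt (fun x : ℝ => 1 / 2 * pφ ^ 2 - a / Real.cosh ((n:ℝ) * x) ^ 2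
        - b / Real.sinh ((n:ℝ) * x) ^ 2)
        (2*(n:ℝ)*a*sh/c^3 + 2*(n:ℝ)*b*c/sh^3) φ := by
      have h := ((hasDerivAt_const φ (1 / 2 * pφ ^ 2)).sub
          ((hasDerivAt_const φ a).div (hcosh.fun_pow 2) (pow_ne_zero 2 hc))).sub
          ((hasDerivAt_const φ b).div (hsinh.fun_pow 2) (pow_ne_zero 2 hsh))
      refine h.congr_deriv ?_
      rw [← hcd, ← hshd]; push_cast; field_simp; ring
    have hsqφ := (HasDerivAt.const_mul (2:ℝ) hgφ).sqrt hg2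
    have hs2x : HasDerivAt (fun x : ℝ => Real.sinh (2 * (n:ℝ) * x))
        (Real.cosh (2*(n:ℝ)*φ) * (2*(n:ℝ))) φ := by
      have h := (((hasDerivAt_id φ).const_mul (2*(n:ℝ)))).sinh
      refine h.congr_deriv ?_
      simp only [id_eq]; ring
    have hc2x : HasDerivAt (fun x : ℝ => Real.cosh (2 * (n:ℝ) * x))
        (Real.sinh (2*(n:ℝ)*φ) * (2*(n:ℝ))) φ := by
      have h := (((hasDerivAt_id φ).const_mul (2*(n:ℝ)))).cosh
      refine h.congr_deriv ?_
      simp only [id_eq]; ring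
    have dI1φ : deriv (fun x => r ^ (-(2 * n : ℤ))
        * (Real.sqrt (2 * (1 / 2 * pφ ^ 2 - a / Real.cosh ((n:ℝ) * x) ^ 2
            - b / Real.sinh ((n:ℝ) * x) ^ 2)) - r * pr) ^ (2 * n)
        * (Real.sqrt (2 * (1 / 2 * pφ ^ 2 - a / Real.cosh ((n:ℝ) * x) ^ 2
            - b / Real.sinh ((n:ℝ) * x) ^ 2)) * Real.sinh (2 * (n:ℝ) * x) * pφ
            + 2 * ((1 / 2 * pφ ^ 2 - a / Real.cosh ((n:ℝ) * x) ^ 2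
                - b / Real.sinh ((n:ℝ) * x) ^ 2) * Real.cosh (2 * (n:ℝ) * x) + a + b))) φ
        = r ^ (-(2 * n : ℤ)) * (2*(n:ℝ) * (s - r*pr)^(2*n-1)
              * ((2*(n:ℝ)*a*sh/c^3 + 2*(n:ℝ)*b*c/sh^3)/s))
            * (s * (2 * sh * c) * pφ + 2 * (g * (c ^ 2 + sh ^ 2) + a + b))
          + r ^ (-(2 * n : ℤ)) * (s - r*pr)^(2*n)
            * (((2*(n:ℝ)*a*sh/c^3 + 2*(n:ℝ)*b*c/sh^3)/s) * (2*sh*c) * pφ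
               + s * (2*(n:ℝ)*(c^2+sh^2)) * pφ
               + 2 * ((2*(n:ℝ)*a*sh/c^3 + 2*(n:ℝ)*b*c/sh^3)*(c^2+sh^2)
                      + g * (2*(n:ℝ)*(2*sh*c)))) := by
      have h := (HasDerivAt.const_mul (r ^ (-(2 * n : ℤ)))
          ((hsqφ.sub_const (r*pr)).fun_pow (2*n))).fun_mul
          (((hsqφ.fun_mul hs2x).mul_const pφ).fun_add
            (HasDerivAt.const_mul (2:ℝ)
              (((hgφ.fun_mul hc2x).add_const a).add_const b)))
      refine h.deriv.trans ?_
      rw [mul_assoc 2 (n:ℝ) φ, Real.cosh_two_mul, Real.sinh_two_mul, ← hcd, ← hshd,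
        ← hgd, ← hsd]
      generalize (s - r*pr) ^ (2*n-1) = X
      generalize (s - r*pr) ^ (2*n) = Y
      try simp only [id_eq]
      push_cast
      field_simp
    have hinner1 : -(2*(n:ℝ))*s*(s * (2 * sh * c) * pφ + 2 * (g * (c ^ 2 + sh ^ 2) + a + b))
        + (-(2*(n:ℝ)*a*sh/c^3) - 2*(n:ℝ)*b*c/sh^3)
          * (pφ/s * (2*sh*c) * pφ + s * (2*sh*c) + 2*pφ*(c^2+sh^2))
        + pφ * (((2*(n:ℝ)*a*sh/c^3 + 2*(n:ℝ)*b*c/sh^3)/s) * (2*sh*c) * pφ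
           + s * (2*(n:ℝ)*(c^2+sh^2)) * pφ
           + 2 * ((2*(n:ℝ)*a*sh/c^3 + 2*(n:ℝ)*b*c/sh^3)*(c^2+sh^2)
                  + g * (2*(n:ℝ)*(2*sh*c)))) = 0 := by
      linear_combination (norm := (field_simp; ring)) (-(4*(n:ℝ))*sh*c*pφ) * hs2
        + (-(4*(n:ℝ))*s*(c^2+sh^2)) * hgd
    rw [dHr, dHpr, dHφ, dHpφ, dI1pr, dI1r, dI1pp, dI1φ]
    rw [show (s - r*pr)^(2*n) = (s - r*pr)^(2*n-1) * (s - r*pr) from by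
      rw [← pow_succ]; congr 1; omega]
    set X := (s - r*pr)^(2*n-1) with hXd
    clear_value X
    set R := r ^ (-(2 * n : ℤ)) with hRd
    clear_value R
    linear_combination (norm := (field_simp; ring)) (R * X * (s - r*pr) / r^2) * hinner1
      + (2*(n:ℝ) * R * X
          * (s * (2 * sh * c) * pφ + 2 * (g * (c ^ 2 + sh ^ 2) + a + b)) / r^2) * hs2
  · have dI2pr : deriv (fun x => r ^ (-(2 * n : ℤ)) * (s + r * x) ^ (2 * n)
        * (s * (2 * sh * c) * pφ - 2 * (g * (c ^ 2 + sh ^ 2) + a + b))) pr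
        = r ^ (-(2 * n : ℤ)) * (2*(n:ℝ) * (s + r*pr)^(2*n-1) * (r))
          * (s * (2 * sh * c) * pφ - 2 * (g * (c ^ 2 + sh ^ 2) + a + b)) := by
      have h := (HasDerivAt.const_mul (r ^ (-(2 * n : ℤ)))
          (((hasDerivAt_const pr s).fun_add ((hasDerivAt_id pr).const_mul r)).fun_pow (2*n))).mul_const
          (s * (2 * sh * c) * pφ - 2 * (g * (c ^ 2 + sh ^ 2) + a + b))
      refine h.deriv.trans ?_
      simp only [id_eq]; push_cast; ring
    have dI2r : deriv (fun x => x ^ (-(2 * n : ℤ)) * (s + x * pr) ^ (2 * n)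
        * (s * (2 * sh * c) * pφ - 2 * (g * (c ^ 2 + sh ^ 2) + a + b))) r
        = (-(2*(n:ℝ)) * r ^ (-(2 * n : ℤ)) / r * (s + r*pr)^(2*n)
           + r ^ (-(2 * n : ℤ)) * (2*(n:ℝ) * (s + r*pr)^(2*n-1) * (pr)))
          * (s * (2 * sh * c) * pφ - 2 * (g * (c ^ 2 + sh ^ 2) + a + b)) := by
      have h := ((hasDerivAt_zpow (-(2 * n : ℤ)) r (Or.inl hr')).fun_mul
          (((hasDerivAt_const r s).fun_add ((hasDerivAt_id r).mul_const pr)).fun_pow (2*n))).mul_const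
          (s * (2 * sh * c) * pφ - 2 * (g * (c ^ 2 + sh ^ 2) + a + b))
      refine h.deriv.trans ?_
      rw [zpow_sub_one₀ hr' (-(2 * n : ℤ))]
      generalize r ^ (-(2 * n : ℤ)) = R
      simp only [id_eq]; push_cast; ring
    have hgx : HasDerivAt (fun x : ℝ => 1 / 2 * x ^ 2 - a / c ^ 2 - b / sh ^ 2)
        (1/2*(2*pφ)) pφ := by
      have h := ((HasDerivAt.const_mul (1/2 : ℝ) (hasDerivAt_pow 2 pφ)).sub_const
          (a / c ^ 2)).sub_const (b / sh ^ 2)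
      refine h.congr_deriv ?_
      push_cast; ring
    have hsq := (HasDerivAt.const_mul (2:ℝ) hgx).sqrt hg2
    have dI2pp : deriv (fun x => r ^ (-(2 * n : ℤ))
        * (Real.sqrt (2 * (1 / 2 * x ^ 2 - a / c ^ 2 - b / sh ^ 2)) + r * pr) ^ (2 * n)
        * (Real.sqrt (2 * (1 / 2 * x ^ 2 - a / c ^ 2 - b / sh ^ 2)) * (2 * sh * c) * x
            - 2 * ((1 / 2 * x ^ 2 - a / c ^ 2 - b / sh ^ 2) * (c ^ 2 + sh ^ 2) + a + b))) pφ
        = r ^ (-(2 * n : ℤ)) * (2*(n:ℝ) * (s + r*pr)^(2*n-1) * (pφ/s))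
            * (s * (2 * sh * c) * pφ - 2 * (g * (c ^ 2 + sh ^ 2) + a + b))
          + r ^ (-(2 * n : ℤ)) * (s + r*pr)^(2*n)
            * (pφ/s * (2*sh*c) * pφ + s * (2*sh*c) - 2*pφ*(c^2+sh^2)) := by
      have h := (HasDerivAt.const_mul (r ^ (-(2 * n : ℤ)))
          ((hsq.add_const (r*pr)).fun_pow (2*n))).fun_mul
          (((hsq.mul_const (2*sh*c)).fun_mul (hasDerivAt_id pφ)).fun_sub
            (HasDerivAt.const_mul (2:ℝ)
              (((hgx.mul_const (c^2+sh^2)).add_const a).add_const b)))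
      refine h.deriv.trans ?_
      rw [← hgd, ← hsd]
      generalize (s + r*pr) ^ (2*n-1) = X
      generalize (s + r*pr) ^ (2*n) = Y
      try simp only [id_eq]
      push_cast
      field_simp
    have hgφ : HasDerivAt (fun x : ℝ => 1 / 2 * pφ ^ 2 - a / Real.cosh ((n:ℝ) * x) ^ 2
        - b / Real.sinh ((n:ℝ) * x) ^ 2)
        (2*(n:ℝ)*a*sh/c^3 + 2*(n:ℝ)*b*c/sh^3) φ := by
      have h := ((hasDerivAt_const φ (1 / 2 * pφ ^ 2)).sub
          ((hasDerivAt_const φ a).div (hcosh.fun_pow 2) (pow_ne_zero 2 hc))).sub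
          ((hasDerivAt_const φ b).div (hsinh.fun_pow 2) (pow_ne_zero 2 hsh))
      refine h.congr_deriv ?_
      rw [← hcd, ← hshd]; push_cast; field_simp; ring
    have hsqφ := (HasDerivAt.const_mul (2:ℝ) hgφ).sqrt hg2
    have hs2x : HasDerivAt (fun x : ℝ => Real.sinh (2 * (n:ℝ) * x))
        (Real.cosh (2*(n:ℝ)*φ) * (2*(n:ℝ))) φ := by
      have h := (((hasDerivAt_id φ).const_mul (2*(n:ℝ)))).sinh
      refine h.congr_deriv ?_
      simp only [id_eq]; ring
    have hc2x : HasDerivAt (fun x : ℝ => Real.cosh (2 * (n:ℝ) * x))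
        (Real.sinh (2*(n:ℝ)*φ) * (2*(n:ℝ))) φ := by
      have h := (((hasDerivAt_id φ).const_mul (2*(n:ℝ)))).cosh
      refine h.congr_deriv ?_
      simp only [id_eq]; ring
    have dI2φ : deriv (fun x => r ^ (-(2 * n : ℤ))
        * (Real.sqrt (2 * (1 / 2 * pφ ^ 2 - a / Real.cosh ((n:ℝ) * x) ^ 2
            - b / Real.sinh ((n:ℝ) * x) ^ 2)) + r * pr) ^ (2 * n)
        * (Real.sqrt (2 * (1 / 2 * pφ ^ 2 - a / Real.cosh ((n:ℝ) * x) ^ 2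
            - b / Real.sinh ((n:ℝ) * x) ^ 2)) * Real.sinh (2 * (n:ℝ) * x) * pφ
            - 2 * ((1 / 2 * pφ ^ 2 - a / Real.cosh ((n:ℝ) * x) ^ 2
                - b / Real.sinh ((n:ℝ) * x) ^ 2) * Real.cosh (2 * (n:ℝ) * x) + a + b))) φ
        = r ^ (-(2 * n : ℤ)) * (2*(n:ℝ) * (s + r*pr)^(2*n-1)
              * ((2*(n:ℝ)*a*sh/c^3 + 2*(n:ℝ)*b*c/sh^3)/s))
            * (s * (2 * sh * c) * pφ - 2 * (g * (c ^ 2 + sh ^ 2) + a + b))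
          + r ^ (-(2 * n : ℤ)) * (s + r*pr)^(2*n)
            * (((2*(n:ℝ)*a*sh/c^3 + 2*(n:ℝ)*b*c/sh^3)/s) * (2*sh*c) * pφ
               + s * (2*(n:ℝ)*(c^2+sh^2)) * pφ
               - 2 * ((2*(n:ℝ)*a*sh/c^3 + 2*(n:ℝ)*b*c/sh^3)*(c^2+sh^2)
                      + g * (2*(n:ℝ)*(2*sh*c)))) := by
      have h := (HasDerivAt.const_mul (r ^ (-(2 * n : ℤ)))
          ((hsqφ.add_const (r*pr)).fun_pow (2*n))).fun_mul
          (((hsqφ.fun_mul hs2x).mul_const pφ).fun_sub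
            (HasDerivAt.const_mul (2:ℝ)
              (((hgφ.fun_mul hc2x).add_const a).add_const b)))
      refine h.deriv.trans ?_
      rw [mul_assoc 2 (n:ℝ) φ, Real.cosh_two_mul, Real.sinh_two_mul, ← hcd, ← hshd,
        ← hgd, ← hsd]
      generalize (s + r*pr) ^ (2*n-1) = X
      generalize (s + r*pr) ^ (2*n) = Y
      try simp only [id_eq]
      push_cast
      field_simp
    have hinner2 : (2*(n:ℝ))*s*(s * (2 * sh * c) * pφ - 2 * (g * (c ^ 2 + sh ^ 2) + a + b))
        + (-(2*(n:ℝ)*a*sh/c^3) - 2*(n:ℝ)*b*c/sh^3)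
          * (pφ/s * (2*sh*c) * pφ + s * (2*sh*c) - 2*pφ*(c^2+sh^2))
        + pφ * (((2*(n:ℝ)*a*sh/c^3 + 2*(n:ℝ)*b*c/sh^3)/s) * (2*sh*c) * pφ
           + s * (2*(n:ℝ)*(c^2+sh^2)) * pφ
           - 2 * ((2*(n:ℝ)*a*sh/c^3 + 2*(n:ℝ)*b*c/sh^3)*(c^2+sh^2)
                  + g * (2*(n:ℝ)*(2*sh*c)))) = 0 := by
      linear_combination (norm := (field_simp; ring)) ((4*(n:ℝ))*sh*c*pφ) * hs2
        + (-(4*(n:ℝ))*s*(c^2+sh^2)) * hgd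
    rw [dHr, dHpr, dHφ, dHpφ, dI2pr, dI2r, dI2pp, dI2φ]
    rw [show (s + r*pr)^(2*n) = (s + r*pr)^(2*n-1) * (s + r*pr) from by
      rw [← pow_succ]; congr 1; omega]
    set X := (s + r*pr)^(2*n-1) with hXd
    clear_value X
    set R := r ^ (-(2 * n : ℤ)) with hRd
    clear_value R
    linear_combination (norm := (field_simp; ring)) (R * X * (s + r*pr) / r^2) * hinner2
      - (2*(n:ℝ) * R * X
          * (s * (2 * sh * c) * pφ - 2 * (g * (c ^ 2 + sh ^ 2) + a + b)) / r^2) * hs2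
  · rw [dHφ, dHpφ, dGφ, dGpφ, deriv_const, deriv_const]
    ring
end
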